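/- Let W₁, W₂, W₃ be i.i.d. random variables with common distribution function F_W(x) = (1 - x^{-β})^{1/2} for x ≥ 1 (β > 0), and set Y₁ = W₂ ∨ W₁ and Y₂ = W₃ ∨ W₂. Then Y₁ and Y₂ each have distribution function 1 - x^{-β} on [1,∞), and for all x, y > 0, lim_{t→∞} t · P(Y₁ > U(t/x), Y₂ > U(t/y)) = (1/2)(x ∧ y), where U(s) = s^{1/β} is the (1 - 1/s)-quantile of the Pareto(β) distribution. -/

import Mathlib

open MeasureTheory ProbabilityTheory Filter Real

private lemma lim_aux {x y : ℝ} (hx : 0 < x) (hy : 0 < y) :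
    Tendsto (fun t : ℝ => x + y - t +
        t * Real.sqrt ((1 - x/t) * (1 - y/t) * (1 - (max x y)/t)))
      atTop (nhds ((1/2) * min x y)) := by
  set m := max x y with hm
  set P : ℝ → ℝ := fun t => (1 - x/t) * (1 - y/t) * (1 - m/t) with hP
  have hPlim : Tendsto P atTop (nhds 1) := by
    have h1 : ∀ c : ℝ, Tendsto (fun t : ℝ => 1 - c/t) atTop (nhds 1) := by
      intro c
      have := tendsto_inv_atTop_zero (𝕜 := ℝ)
      have h2 : Tendsto (fun t : ℝ => c/t) atTop (nhds 0) := by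
        simpa [div_eq_mul_inv] using this.const_mul c
      simpa using (tendsto_const_nhds (x := (1:ℝ))).sub h2
    simpa using ((h1 x).mul (h1 y)).mul (h1 m)
  have hsq : Tendsto (fun t => Real.sqrt (P t)) atTop (nhds 1) := by
    have := (Real.continuous_sqrt.continuousAt (x := (1:ℝ))).tendsto.comp hPlim
    simpa using (show Tendsto (fun t => Real.sqrt (P t)) atTop (nhds (Real.sqrt 1)) from this)
  have hnum : Tendsto (fun t : ℝ => (x+y+m) - (x*y+x*m+y*m)/t + (x*y*m)/t^2)
      atTop (nhds (x+y+m)) := by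
    have hinv := tendsto_inv_atTop_zero (𝕜 := ℝ)
    have h2 : Tendsto (fun t : ℝ => (x*y+x*m+y*m)/t) atTop (nhds 0) := by
      simpa [div_eq_mul_inv] using hinv.const_mul (x*y+x*m+y*m)
    have h3 : Tendsto (fun t : ℝ => (x*y*m)/t^2) atTop (nhds 0) := by
      have : Tendsto (fun t : ℝ => t^2) atTop atTop := tendsto_pow_atTop (by norm_num)
      have := (tendsto_inv_atTop_zero (𝕜 := ℝ)).comp this
      simpa [div_eq_mul_inv, Function.comp] using this.const_mul (x*y*m)
    simpa using ((tendsto_const_nhds (x := (x+y+m))).sub h2).add h3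
  have hglim : Tendsto (fun t : ℝ => x + y -
      ((x+y+m) - (x*y+x*m+y*m)/t + (x*y*m)/t^2) / (1 + Real.sqrt (P t)))
      atTop (nhds ((1/2) * min x y)) := by
    have hden : Tendsto (fun t => 1 + Real.sqrt (P t)) atTop (nhds 2) := by
      simpa [one_add_one_eq_two] using (tendsto_const_nhds (x := (1:ℝ))).add hsq
    have := (tendsto_const_nhds (x := x + y)).sub (hnum.div hden (by norm_num))
    have hval : x + y - (x+y+m)/2 = (1/2) * min x y := by
      have := min_add_max x y
      rw [← hm] at this
      linarith
    rw [hval] at this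
    exact this
  refine Tendsto.congr' ?_ hglim
  filter_upwards [eventually_ge_atTop (max m 1)] with t ht
  have htm : m ≤ t := le_trans (le_max_left _ _) ht
  have ht1 : (1:ℝ) ≤ t := le_trans (le_max_right _ _) ht
  have ht0 : (0:ℝ) < t := lt_of_lt_of_le one_pos ht1
  have hxt : x ≤ t := le_trans (le_trans (le_max_left x y) (le_refl m)) htm
  have hyt : y ≤ t := le_trans (le_max_right x y) htm
  have hP0 : 0 ≤ P t := by
    have h1 : 0 ≤ 1 - x/t := by rw [sub_nonneg, div_le_one ht0]; exact hxt
    have h2 : 0 ≤ 1 - y/t := by rw [sub_nonneg, div_le_one ht0]; exact hyt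
    have h3 : 0 ≤ 1 - m/t := by rw [sub_nonneg, div_le_one ht0]; exact htm
    positivity
  set s := Real.sqrt (P t) with hs
  have hs2 : s^2 = P t := Real.sq_sqrt hP0
  have hden : 1 + s ≠ 0 := by positivity
  have key : t * (1 - P t) = (x+y+m) - (x*y+x*m+y*m)/t + (x*y*m)/t^2 := by
    rw [hP]
    field_simp
    ring
  have h4 : t - t*s = ((x+y+m) - (x*y+x*m+y*m)/t + (x*y*m)/t^2) / (1 + s) := by
    rw [eq_div_iff hden, ← key, ← hs2]; ring
  have : x + y - (((x+y+m) - (x*y+x*m+y*m)/t + (x*y*m)/t^2)) / (1 + s)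
      = x + y - t + t * s := by rw [← h4]; ring
  exact this

theorem stmt2
    {Ω : Type*} [MeasurableSpace Ω] (μ : Measure Ω) [IsProbabilityMeasure μ]
    (β : ℝ) (hβ : 0 < β)
    (W : Fin 3 → Ω → ℝ) (hWm : ∀ i, Measurable (W i))
    (hiid : iIndepFun W μ)
    (hcdf : ∀ i x, (μ {ω | W i ω ≤ x}).toReal =
      if 1 ≤ x then (1 - x ^ (-β)) ^ ((1 : ℝ) / 2) else 0) :
    (∀ x ≥ (1 : ℝ), (μ {ω | max (W 1 ω) (W 0 ω) ≤ x}).toReal = 1 - x ^ (-β)) ∧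
    (∀ x > (0 : ℝ), ∀ y > (0 : ℝ),
      Tendsto (fun t : ℝ => t * (μ {ω | max (W 1 ω) (W 0 ω) > (t / x) ^ (1 / β)
          ∧ max (W 2 ω) (W 1 ω) > (t / y) ^ (1 / β)}).toReal)
        atTop (nhds ((1 / 2) * min x y))) := by
  have hprod : ∀ (S : Finset (Fin 3)) (c : Fin 3 → ℝ),
      (μ (⋂ i ∈ S, {ω | W i ω ≤ c i})).toReal
        = ∏ i ∈ S, (μ {ω | W i ω ≤ c i}).toReal := by
    intro S c
    have h := (iIndepFun_iff_measure_inter_preimage_eq_mul.mp hiid) S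
      (sets := fun i => Set.Iic (c i)) (fun i _ => measurableSet_Iic)
    have he : ∀ i : Fin 3, W i ⁻¹' Set.Iic (c i) = {ω | W i ω ≤ c i} := fun i => rfl
    simp only [he] at h
    rw [h, ENNReal.toReal_prod]
  have hF : ∀ (i : Fin 3) (c : ℝ), 1 ≤ c →
      (μ {ω | W i ω ≤ c}).toReal = Real.sqrt (1 - c ^ (-β)) := by
    intro i c hc
    rw [hcdf, if_pos hc, ← Real.sqrt_eq_rpow]
  have hmax2 : ∀ (c : ℝ) (i j : Fin 3),
      {ω | max (W i ω) (W j ω) ≤ c} = ⋂ k ∈ ({i, j} : Finset (Fin 3)),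
        {ω | W k ω ≤ (fun _ => c) k} := by
    intro c i j
    ext ω
    simp only [Set.mem_setOf_eq, max_le_iff, Set.mem_iInter, Finset.mem_insert,
      Finset.mem_singleton]
    constructor
    · rintro ⟨h1, h2⟩ k hk
      rcases hk with rfl | rfl <;> assumption
    · intro h
      exact ⟨h i (Or.inl rfl), h j (Or.inr rfl)⟩
  have hFsq : ∀ (c : ℝ) (i j : Fin 3), i ≠ j → 1 ≤ c →
      (μ {ω | max (W i ω) (W j ω) ≤ c}).toReal = 1 - c ^ (-β) := by
    intro c i j hij hc
    rw [hmax2 c i j, hprod, Finset.prod_pair hij]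
    have h0 : 0 ≤ 1 - c ^ (-β) := by
      have := Real.rpow_le_one_of_one_le_of_nonpos hc (neg_nonpos.mpr hβ.le)
      linarith
    rw [hF i c hc, hF j c hc, Real.mul_self_sqrt h0]
  constructor
  · intro x hx
    exact hFsq x 1 0 (by decide) hx
  · intro x hx y hy
    refine Tendsto.congr' ?_ (lim_aux hx hy)
    have hmpos : 0 < max x y := lt_of_lt_of_le hx (le_max_left _ _)
    set m := max x y with hmdef
    filter_upwards [eventually_ge_atTop (max m 1)] with t ht
    have htm : m ≤ t := le_trans (le_max_left _ _) ht
    have ht1 : (1:ℝ) ≤ t := le_trans (le_max_right _ _) ht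
    have ht0 : (0:ℝ) < t := lt_of_lt_of_le one_pos ht1
    have hxt : x ≤ t := le_trans (le_max_left x y) htm
    have hyt : y ≤ t := le_trans (le_max_right x y) htm
    set a := (t/x) ^ (1/β) with hadef
    set b := (t/y) ^ (1/β) with hbdef
    set cc := (t/m) ^ (1/β) with hcdef2
    have hone : ∀ z : ℝ, 0 < z → z ≤ t → 1 ≤ (t/z) ^ (1/β) :=
      fun z hz hzt => Real.one_le_rpow ((one_le_div hz).mpr hzt) (by positivity)
    have ha1 : 1 ≤ a := hone x hx hxt
    have hb1 : 1 ≤ b := hone y hy hyt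
    have hc1 : 1 ≤ cc := hone m hmpos htm
    have hpow : ∀ z : ℝ, 0 < z → ((t/z) ^ (1/β) : ℝ) ^ (-β) = z/t := by
      intro z hz
      have h0 : (0:ℝ) ≤ t/z := by positivity
      rw [← Real.rpow_mul h0]
      have : (1/β) * (-β) = -1 := by field_simp
      rw [this, Real.rpow_neg_one, inv_div]
    have hnn : ∀ z : ℝ, z ≤ t → (0:ℝ) ≤ 1 - z/t := by
      intro z hzt
      rw [sub_nonneg, div_le_one ht0]; exact hzt
    have hminab : min a b = cc := by
      rcases le_total x y with h | h
      · have hmy : m = y := max_eq_right h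
        have : b ≤ a := by
          rw [hadef, hbdef]
          exact Real.rpow_le_rpow (by positivity)
            (div_le_div_of_nonneg_left ht0.le hx h) (by positivity)
        rw [min_eq_right this, hcdef2, hmy]
      · have hmx : m = x := max_eq_left h
        have : a ≤ b := by
          rw [hadef, hbdef]
          exact Real.rpow_le_rpow (by positivity)
            (div_le_div_of_nonneg_left ht0.le hy h) (by positivity)
        rw [min_eq_left this, hcdef2, hmx]
    set A := {ω | max (W 1 ω) (W 0 ω) ≤ a} with hAdef
    set B := {ω | max (W 2 ω) (W 1 ω) ≤ b} with hBdef
    have hAm : MeasurableSet A := measurableSet_le ((hWm 1).max (hWm 0)) measurable_const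
    have hBm : MeasurableSet B := measurableSet_le ((hWm 2).max (hWm 1)) measurable_const
    have hμA : (μ A).toReal = 1 - x/t := by
      rw [hAdef, hFsq a 1 0 (by decide) ha1, hpow x hx]
    have hμB : (μ B).toReal = 1 - y/t := by
      rw [hBdef, hFsq b 2 1 (by decide) hb1, hpow y hy]
    have hμAB : (μ (A ∩ B)).toReal
        = Real.sqrt (1 - x/t) * Real.sqrt (1 - m/t) * Real.sqrt (1 - y/t) := by
      have hABe : A ∩ B = ⋂ i ∈ (Finset.univ : Finset (Fin 3)),
          {ω | W i ω ≤ (![a, min a b, b] : Fin 3 → ℝ) i} := by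
        ext ω
        simp only [hAdef, hBdef, Set.mem_inter_iff, Set.mem_setOf_eq, max_le_iff,
          Set.mem_iInter, Finset.mem_univ, forall_true_left]
        constructor
        · rintro ⟨⟨h1, h0⟩, ⟨h2, h1'⟩⟩
          intro i
          fin_cases i <;> simp [le_min_iff] <;> try tauto
        · intro h
          have h0 := h 0; have h1 := h 1; have h2 := h 2
          simp only [Matrix.cons_val_zero, Matrix.cons_val_one, Matrix.head_cons,
            Matrix.cons_val_two, Matrix.tail_cons, le_min_iff] at h0 h1 h2
          exact ⟨⟨h1.1, h0⟩, h2, h1.2⟩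
      rw [hABe, hprod, Fin.prod_univ_three]
      simp only [Matrix.cons_val_zero, Matrix.cons_val_one, Matrix.head_cons,
        Matrix.cons_val_two, Matrix.tail_cons]
      rw [hminab]
      rw [hF 0 a ha1, hF 1 cc hc1, hF 2 b hb1, hpow x hx, hpow m hmpos, hpow y hy]
    have htarget : {ω | max (W 1 ω) (W 0 ω) > a ∧ max (W 2 ω) (W 1 ω) > b}
        = (A ∪ B)ᶜ := by
      ext ω
      simp only [hAdef, hBdef, Set.mem_setOf_eq, Set.mem_compl_iff, Set.mem_union,
        not_or, not_le]
    have hfin : ∀ s : Set Ω, μ s ≠ ⊤ := fun s => measure_ne_top μ s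
    have hu := measure_union_add_inter A hBm (μ := μ)
    have hu' : (μ (A ∪ B)).toReal + (μ (A ∩ B)).toReal
        = (μ A).toReal + (μ B).toReal := by
      rw [← ENNReal.toReal_add (hfin _) (hfin _), ← ENNReal.toReal_add (hfin _) (hfin _), hu]
    have hcompl : (μ ((A ∪ B)ᶜ)).toReal = 1 - (μ (A ∪ B)).toReal := by
      have h := measure_add_measure_compl (hAm.union hBm) (μ := μ)
      have h2 : (μ (A ∪ B)).toReal + (μ ((A ∪ B)ᶜ)).toReal = 1 := by
        rw [← ENNReal.toReal_add (hfin _) (hfin _), h, measure_univ, ENNReal.toReal_one]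
      linarith
    have hμT : (μ {ω | max (W 1 ω) (W 0 ω) > a ∧ max (W 2 ω) (W 1 ω) > b}).toReal
        = x/t + y/t - 1
          + Real.sqrt (1 - x/t) * Real.sqrt (1 - m/t) * Real.sqrt (1 - y/t) := by
      rw [htarget, hcompl]
      have : (μ (A ∪ B)).toReal = (1 - x/t) + (1 - y/t)
          - Real.sqrt (1 - x/t) * Real.sqrt (1 - m/t) * Real.sqrt (1 - y/t) := by
        linarith [hu', hμA, hμB, hμAB]
      rw [this]; ring
    have hsqrt : Real.sqrt ((1 - x/t) * (1 - y/t) * (1 - m/t))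
        = Real.sqrt (1 - x/t) * Real.sqrt (1 - m/t) * Real.sqrt (1 - y/t) := by
      rw [Real.sqrt_mul (mul_nonneg (hnn x hxt) (hnn y hyt)),
        Real.sqrt_mul (hnn x hxt)]
      ring
    show x + y - t + t * Real.sqrt ((1 - x/t) * (1 - y/t) * (1 - m/t))
        = t * (μ {ω | max (W 1 ω) (W 0 ω) > a ∧ max (W 2 ω) (W 1 ω) > b}).toReal
    rw [hμT, hsqrt]
    have htne : t ≠ 0 := ht0.ne'
    field_simp
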